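/- For d ≥ 1 and ℓ ≥ 3, the number n_{d,ℓ} of cyclic-Kautz sequences of length ℓ satisfies the recurrence n_{d,ℓ} = d^ℓ + d^(ℓ−1) − n_{d,ℓ−1}, where n_{d,ℓ} counts sequences x₁…x_ℓ over Z_{d+1} with consecutive entries distinct and x₁ ≠ x_ℓ. -/
import Mathlib


/-- `nCK d ℓ`: the number of cyclic-Kautz sequences of length `ℓ` over `Z_{d+1}`,
i.e. sequences with consecutive entries distinct and first entry distinct from last. -/
def nCK (d ℓ : ℕ) : ℕ :=
  Fintype.card {x : Fin ℓ → Fin (d + 1) //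
    (∀ i j : Fin ℓ, j.val = i.val + 1 → x i ≠ x j) ∧
    (∀ i j : Fin ℓ, i.val = 0 → j.val = ℓ - 1 → x i ≠ x j)}

def isPath (d n : ℕ) (x : Fin n → Fin (d+1)) : Prop :=
  ∀ i j : Fin n, j.val = i.val + 1 → x i ≠ x j

instance (d n : ℕ) : DecidablePred (isPath d n) := fun _ => by unfold isPath; infer_instance

lemma card_ne (d : ℕ) (a : Fin (d+1)) : Fintype.card {y : Fin (d+1) // y ≠ a} = d := by
  simp [Fintype.card_subtype_compl]

lemma card_path (d k : ℕ) :
    Fintype.card {x : Fin (k+1) → Fin (d+1) // isPath d (k+1) x} = (d+1) * d^k := by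
  induction k with
  | zero =>
    have h1 : ∀ x : Fin 1 → Fin (d+1), isPath d 1 x := by
      intro x i j h; omega
    rw [Fintype.card_eq.mpr ⟨Equiv.subtypeUnivEquiv h1⟩]
    simp
  | succ k ih =>
    have e : {x : Fin (k+2) → Fin (d+1) // isPath d (k+2) x} ≃
        Σ p : {x : Fin (k+1) → Fin (d+1) // isPath d (k+1) x},
          {y : Fin (d+1) // y ≠ p.val (Fin.last k)} := by
      refine ⟨fun x => ⟨⟨x.val ∘ Fin.castSucc, ?_⟩, ⟨x.val (Fin.last (k+1)), ?_⟩⟩,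
        fun p => ⟨Fin.snoc p.1.val p.2.val, ?_⟩, ?_, ?_⟩
      · intro i j h
        exact x.2 i.castSucc j.castSucc (by simpa using h)
      · exact (x.2 (Fin.last k).castSucc (Fin.last (k+1)) (by simp)).symm
      · intro i j h
        by_cases hj : j = Fin.last (k+1)
        · subst hj
          have hi : i = (Fin.last k).castSucc := by
            apply Fin.ext; simp at h ⊢; omega
          subst hi
          simp only [Fin.snoc_last, Fin.snoc_castSucc]
          exact (p.2.2).symm
        · have hj' : j.val < k+1 := by
            rcases Fin.lt_or_eq_of_le (Fin.le_last j) with h' | h'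
            · exact h'
            · exact absurd h' hj
          have hi' : i.val < k+1 := by omega
          have e1 : Fin.snoc (α := fun _ => Fin (d+1)) p.1.val p.2.val i
              = p.1.val ⟨i.val, hi'⟩ :=
            Fin.snoc_castSucc (α := fun _ => Fin (d+1)) p.2.val p.1.val ⟨i.val, hi'⟩
          have e2 : Fin.snoc (α := fun _ => Fin (d+1)) p.1.val p.2.val j
              = p.1.val ⟨j.val, hj'⟩ :=
            Fin.snoc_castSucc (α := fun _ => Fin (d+1)) p.2.val p.1.val ⟨j.val, hj'⟩
          rw [e1, e2]
          exact p.1.2 _ _ h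
      · intro x
        ext i
        refine Fin.lastCases ?_ ?_ i <;> simp
      · intro p
        refine Sigma.subtype_ext ?_ ?_
        · apply Subtype.ext; funext i; simp
        · simp
    rw [Fintype.card_eq.mpr ⟨e⟩, Fintype.card_sigma]
    simp only [card_ne]
    rw [Finset.sum_const, smul_eq_mul, Finset.card_univ, ih]
    ring

lemma hA (d k : ℕ) :
    Fintype.card {x : Fin (k+2) → Fin (d+1) //
      isPath d (k+2) x ∧ ¬ (x 0 = x (Fin.last (k+1)))} = nCK d (k+2) := by
  unfold nCK
  apply Fintype.card_congr
  apply Equiv.subtypeEquivRight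
  intro x
  constructor
  · rintro ⟨hp, hne⟩
    refine ⟨hp, ?_⟩
    intro i j hi hj
    have h1 : i = 0 := Fin.ext (by simpa using hi)
    have h2 : j = Fin.last (k+1) := Fin.ext (by simp [hj])
    subst h1; subst h2; exact hne
  · rintro ⟨hp, hq⟩
    exact ⟨hp, hq 0 (Fin.last (k+1)) rfl (by simp)⟩

lemma hB (d k : ℕ) :
    Fintype.card {x : Fin (k+2) → Fin (d+1) //
      isPath d (k+2) x ∧ x 0 = x (Fin.last (k+1))} = nCK d (k+1) := by
  unfold nCK
  apply Fintype.card_congr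
  refine ⟨fun x => ⟨x.val ∘ Fin.castSucc, ?_, ?_⟩,
    fun y => ⟨Fin.snoc y.val (y.val 0), ?_, ?_⟩, ?_, ?_⟩
  · intro i j h
    exact x.2.1 i.castSucc j.castSucc (by simpa using h)
  · intro i j hi hj
    have h1 : i = 0 := Fin.ext (by simpa using hi)
    have h2 : j = Fin.last k := Fin.ext (by simp [hj])
    subst h1; subst h2
    have e0 : (Fin.castSucc (0 : Fin (k+1))) = (0 : Fin (k+2)) := rfl
    simp only [Function.comp_apply, e0]
    rw [x.2.2]
    exact (x.2.1 (Fin.last k).castSucc (Fin.last (k+1)) (by simp)).symm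
  · intro i j h
    by_cases hj : j = Fin.last (k+1)
    · subst hj
      have hi : i = (Fin.last k).castSucc := by
        apply Fin.ext; simp at h ⊢; omega
      subst hi
      simp only [Fin.snoc_last, Fin.snoc_castSucc]
      exact (y.2.2 0 (Fin.last k) rfl (by simp)).symm
    · have hj' : j.val < k+1 := by
        rcases Fin.lt_or_eq_of_le (Fin.le_last j) with h' | h'
        · exact h'
        · exact absurd h' hj
      have hi' : i.val < k+1 := by omega
      have e1 : Fin.snoc (α := fun _ => Fin (d+1)) y.val (y.val 0) i
          = y.val ⟨i.val, hi'⟩ :=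
        Fin.snoc_castSucc (α := fun _ => Fin (d+1)) (y.val 0) y.val ⟨i.val, hi'⟩
      have e2 : Fin.snoc (α := fun _ => Fin (d+1)) y.val (y.val 0) j
          = y.val ⟨j.val, hj'⟩ :=
        Fin.snoc_castSucc (α := fun _ => Fin (d+1)) (y.val 0) y.val ⟨j.val, hj'⟩
      rw [e1, e2]
      exact y.2.1 _ _ h
  · have e0 : (0 : Fin (k+2)) = Fin.castSucc (0 : Fin (k+1)) := rfl
    rw [e0, Fin.snoc_castSucc, Fin.snoc_last]
  · intro x
    apply Subtype.ext
    funext i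
    refine Fin.lastCases ?_ ?_ i
    · simp only [Fin.snoc_last, Function.comp_apply]
      have e0 : (Fin.castSucc (0 : Fin (k+1))) = (0 : Fin (k+2)) := rfl
      rw [e0, ← x.2.2]
    · intro i; simp
  · intro y
    apply Subtype.ext
    funext i
    simp

lemma split (d k : ℕ) :
    Fintype.card {x : Fin (k+2) → Fin (d+1) // isPath d (k+2) x} =
      nCK d (k+2) + nCK d (k+1) := by
  classical
  rw [← hA d k, ← hB d k]
  have key := Finset.card_filter_add_card_filter_not
    (s := Finset.univ.filter (isPath d (k+2)))
    (p := fun x : Fin (k+2) → Fin (d+1) => x 0 = x (Fin.last (k+1)))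
  simp only [Finset.filter_filter, Finset.filter_congr_decidable] at key
  simp only [Fintype.card_subtype, Finset.filter_congr_decidable]
  exact key.symm.trans (Nat.add_comm _ _)

/-- The recurrence `n_{d,ℓ} = d^ℓ + d^(ℓ-1) − n_{d,ℓ-1}` for `ℓ ≥ 3`. -/
theorem stmt2 (d ℓ : ℕ) (hd : 1 ≤ d) (hℓ : 3 ≤ ℓ) :
    (nCK d ℓ : ℤ) = (d : ℤ) ^ ℓ + (d : ℤ) ^ (ℓ - 1) - nCK d (ℓ - 1) := by
  obtain ⟨k, rfl⟩ := Nat.exists_eq_add_of_le hℓ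
  have key : nCK d (k+3) + nCK d (k+2) = (d+1) * d^(k+2) := by
    rw [← split d (k+1), card_path d (k+2)]
  have h1 : (3 + k : ℕ) = k + 3 := by omega
  have h2 : (3 + k - 1 : ℕ) = k + 2 := by omega
  rw [h2, h1]
  have := congrArg (Nat.cast : ℕ → ℤ) key
  push_cast at this ⊢
  ring_nf at this ⊢
  linarith
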